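/- arXiv:1711.01042 — 2 statements merged into one kernel-verified Lean document; each statement's English description precedes it below -/
import Mathlib

section
/- Let E be a real inner product space and n a natural number. The normalized Gram–Schmidt map, which sends an n-tuple (v₁,…,vₙ) of vectors of E to the n-tuple obtained by the Gram–Schmidt orthonormalization procedure (at each step subtracting the orthogonal projections onto the previously constructed vectors and normalizing), is continuous at every linearly independent n-tuple (v₁,…,vₙ). -/
open InnerProductSpace

private theorem gs_continuousAt
    {E : Type*} [NormedAddCommGroup E] [InnerProductSpace ℝ E] {n : ℕ}
    (v : Fin n → E) (hv : LinearIndependent ℝ v) (i : Fin n) :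
    haveI : WellFoundedLT (Fin n) := inferInstance
    ContinuousAt (fun w : Fin n → E => gramSchmidt ℝ w i) v := by
  haveI : WellFoundedLT (Fin n) := inferInstance
  induction i using WellFoundedLT.induction with
  | ind i IH =>
    have key : (fun w : Fin n → E => gramSchmidt ℝ w i) =
        fun w : Fin n → E => w i - ∑ j ∈ Finset.Iio i,
          ((inner ℝ (gramSchmidt ℝ w j) (w i) : ℝ) / ‖gramSchmidt ℝ w j‖ ^ 2) •
            gramSchmidt ℝ w j := by
      funext w
      rw [gramSchmidt_def]
      congr 1
      refine Finset.sum_congr rfl fun j _ => ?_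
      rw [Submodule.starProjection_singleton]
      norm_num
    rw [key]
    refine ContinuousAt.sub ((continuous_apply i).continuousAt) ?_
    refine tendsto_finset_sum _ fun j hj => ?_
    have hj' : j < i := Finset.mem_Iio.mp hj
    have hg := IH j hj'
    have hne : gramSchmidt ℝ v j ≠ 0 := gramSchmidt_ne_zero j hv
    have hd : ‖gramSchmidt ℝ v j‖ ^ 2 ≠ 0 := pow_ne_zero 2 (norm_ne_zero_iff.mpr hne)
    exact ((ContinuousAt.inner hg ((continuous_apply i).continuousAt)).div
      ((hg.norm).pow 2) hd).smul hg

/-- The normalized Gram–Schmidt map, sending an `n`-tuple of vectors in a real inner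
product space to the `n`-tuple obtained by the Gram–Schmidt orthonormalization
procedure, is continuous at every linearly independent `n`-tuple. -/
theorem gramSchmidtNormed_continuousAt
    {E : Type*} [NormedAddCommGroup E] [InnerProductSpace ℝ E] (n : ℕ)
    (v : Fin n → E) (hv : LinearIndependent ℝ v) :
    haveI : WellFoundedLT (Fin n) := inferInstance
    ContinuousAt (fun w : Fin n → E => InnerProductSpace.gramSchmidtNormed ℝ w) v := by
  haveI : WellFoundedLT (Fin n) := inferInstance
  rw [continuousAt_pi]
  intro i
  have hg := gs_continuousAt v hv i
  have hne : gramSchmidt ℝ v i ≠ 0 := gramSchmidt_ne_zero i hv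
  have key : (fun w : Fin n → E => gramSchmidtNormed ℝ w i) =
      fun w : Fin n → E => ‖gramSchmidt ℝ w i‖⁻¹ • gramSchmidt ℝ w i := by
    funext w
    rw [gramSchmidtNormed]
    norm_num
  exact key ▸ ((hg.norm.inv₀ (norm_ne_zero_iff.mpr hne)).smul hg)
end

section
/- Let H be a real Hilbert space, X a topological space, n a natural number, and v : X → Hⁿ a continuous map such that the tuple v(x₀) = (v₁(x₀),…,vₙ(x₀)) is linearly independent. Then the map assigning to each x the orthogonal projection operator of H onto the span of {v₁(x),…,vₙ(x)} (regarded as an element of L(H,H) with the operator norm) is continuous at x₀. -/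
/-- The orthogonal projection of a real Hilbert space `H` onto the span of finitely many
vectors, regarded as a continuous linear operator `H →L[ℝ] H`. -/
noncomputable def projOntoSpan {H : Type*} [NormedAddCommGroup H] [InnerProductSpace ℝ H]
    [CompleteSpace H] {n : ℕ} (w : Fin n → H) : H →L[ℝ] H :=
  haveI : FiniteDimensional ℝ (Submodule.span ℝ (Set.range w)) :=
    FiniteDimensional.span_of_finite ℝ (Set.finite_range w)
  (Submodule.span ℝ (Set.range w)).subtypeL.comp
    (Submodule.orthogonalProjection (Submodule.span ℝ (Set.range w)))

/-- Helper instance: `WellFoundedLT` for `Fin n` along the `LT` instance obtained through the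
lattice structure, which is what instance resolution produces when elaborating `gramSchmidt`. -/
instance (n : ℕ) :
    @WellFoundedLT (Fin n)
      (@Preorder.toLT (Fin n)
        (@PartialOrder.toPreorder (Fin n)
          (@SemilatticeInf.toPartialOrder (Fin n)
            (@Lattice.toSemilatticeInf (Fin n)
              (@DistribLattice.toLattice (Fin n)
                (@instDistribLatticeOfLinearOrder (Fin n) (Fin.instLinearOrder (n := n)))))))) :=
  inferInstanceAs (WellFoundedLT (Fin n))

open InnerProductSpace

section Aux

variable {H : Type*} [NormedAddCommGroup H] [InnerProductSpace ℝ H] [CompleteSpace H]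

lemma smulRightL_apply' (c : H →L[ℝ] ℝ) (f : H) (x : H) :
    ContinuousLinearMap.smulRightL ℝ H H c f x = c x • f := rfl

/-- For a linearly independent tuple, the projection onto the span is the sum of
rank-one projections coming from the Gram–Schmidt orthonormalization. -/
lemma projOntoSpan_eq_sum {n : ℕ} (w : Fin n → H) (hw : LinearIndependent ℝ w) :
    projOntoSpan w = ∑ i, ContinuousLinearMap.smulRightL ℝ H H
      (innerSL ℝ (gramSchmidtNormed ℝ w i)) (gramSchmidtNormed ℝ w i) := by
  haveI : FiniteDimensional ℝ (Submodule.span ℝ (Set.range w)) :=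
    FiniteDimensional.span_of_finite ℝ (Set.finite_range w)
  set e := gramSchmidtNormed ℝ w with he
  have hon : Orthonormal ℝ e := gramSchmidtNormed_orthonormal (𝕜 := ℝ) hw
  have hspan : Submodule.span ℝ (Set.range e) = Submodule.span ℝ (Set.range w) := by
    rw [he, span_gramSchmidtNormed_range, span_gramSchmidt]
  ext x
  simp only [projOntoSpan, ContinuousLinearMap.comp_apply, Submodule.subtypeL_apply,
    ContinuousLinearMap.sum_apply, smulRightL_apply', innerSL_apply_apply]
  apply Submodule.eq_starProjection_of_mem_of_inner_eq_zero
  · rw [← hspan]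
    exact Submodule.sum_mem _ fun i _ => Submodule.smul_mem _ _
      (Submodule.subset_span (Set.mem_range_self i))
  · intro y hy
    rw [← hspan] at hy
    induction hy using Submodule.span_induction with
    | mem y hy =>
        obtain ⟨j, rfl⟩ := hy
        rw [inner_sub_left, hon.inner_left_fintype (fun i => (inner ℝ (e i) x : ℝ)) j]
        simp [real_inner_comm]
    | zero => simp
    | add y z _ _ hy hz => rw [inner_add_right, hy, hz, add_zero]
    | smul c y _ hy => rw [inner_smul_right, hy, mul_zero]

lemma gramSchmidt_continuousAt {X : Type*} [TopologicalSpace X] {n : ℕ}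
    (v : X → Fin n → H) (hv : Continuous v) (x₀ : X)
    (hli : LinearIndependent ℝ (v x₀)) (i : Fin n) :
    ContinuousAt (fun x => gramSchmidt ℝ (v x) i) x₀ := by
  suffices Key : ∀ m : ℕ, ∀ i : Fin n, (i : ℕ) = m →
      ContinuousAt (fun x => gramSchmidt ℝ (v x) i) x₀ from Key i i rfl
  intro m
  induction m using Nat.strong_induction_on with
  | _ m ih =>
    intro i him
    have hrw : (fun x => gramSchmidt ℝ (v x) i) = fun x =>
        v x i - ∑ j ∈ Finset.Iio i,
          ((inner ℝ (gramSchmidt ℝ (v x) j) (v x i) : ℝ) / ((‖gramSchmidt ℝ (v x) j‖ : ℝ) ^ 2)) •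
            gramSchmidt ℝ (v x) j := by
      funext x
      rw [gramSchmidt_def]
      congr 1
      refine Finset.sum_congr rfl fun j _ => ?_
      rw [Submodule.starProjection_singleton]
      norm_num
    rw [hrw]
    refine ContinuousAt.sub (((continuous_apply i).comp hv).continuousAt) ?_
    refine tendsto_finset_sum _ fun j hj => ?_
    have hjm : (j : ℕ) < m := him ▸ (Fin.lt_def.mp (Finset.mem_Iio.mp hj))
    have hgj : ContinuousAt (fun x => gramSchmidt ℝ (v x) j) x₀ := ih (j : ℕ) hjm j rfl
    have hne : gramSchmidt ℝ (v x₀) j ≠ 0 := gramSchmidt_ne_zero j hli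
    have hvic : ContinuousAt (fun x => v x i) x₀ := ((continuous_apply i).comp hv).continuousAt
    exact ((hgj.inner hvic).div ((hgj.norm).pow 2)
      (pow_ne_zero 2 (norm_ne_zero_iff.mpr hne))).smul hgj

lemma gramSchmidtNormed_continuousAt_s3 {X : Type*} [TopologicalSpace X] {n : ℕ}
    (v : X → Fin n → H) (hv : Continuous v) (x₀ : X)
    (hli : LinearIndependent ℝ (v x₀)) (i : Fin n) :
    ContinuousAt (fun x => gramSchmidtNormed ℝ (v x) i) x₀ := by
  have hg := gramSchmidt_continuousAt v hv x₀ hli i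
  have hne : gramSchmidt ℝ (v x₀) i ≠ 0 := gramSchmidt_ne_zero i hli
  have := (hg.norm.inv₀ (norm_ne_zero_iff.mpr hne)).smul hg
  simp only [gramSchmidtNormed, RCLike.ofReal_real_eq_id, id]
  exact this

end Aux

/-- If `v : X → Hⁿ` is continuous and `v x₀` is a linearly independent tuple in a real
Hilbert space `H`, then the map assigning to each `x` the orthogonal projection operator
of `H` onto the span of `{v₁(x),…,vₙ(x)}` (as an element of `L(H,H)` with the operator
norm) is continuous at `x₀`. -/
theorem projOntoSpan_continuousAt {H : Type*} [NormedAddCommGroup H] [InnerProductSpace ℝ H]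
    [CompleteSpace H] {X : Type*} [TopologicalSpace X] (n : ℕ)
    (v : X → Fin n → H) (hv : Continuous v) (x₀ : X)
    (hli : LinearIndependent ℝ (v x₀)) :
    ContinuousAt (fun x => projOntoSpan (v x)) x₀ := by
  have hU : ∀ᶠ x in nhds x₀, LinearIndependent ℝ (v x) :=
    hv.continuousAt.preimage_mem_nhds (isOpen_setOf_linearIndependent.mem_nhds hli)
  have heq : (fun x => projOntoSpan (v x)) =ᶠ[nhds x₀]
      fun x => ∑ i, ContinuousLinearMap.smulRightL ℝ H H
        (innerSL ℝ (gramSchmidtNormed ℝ (v x) i)) (gramSchmidtNormed ℝ (v x) i) :=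
    hU.mono fun x hx => projOntoSpan_eq_sum (v x) hx
  have hcont : ContinuousAt (fun x => ∑ i, ContinuousLinearMap.smulRightL ℝ H H
      (innerSL ℝ (gramSchmidtNormed ℝ (v x) i)) (gramSchmidtNormed ℝ (v x) i)) x₀ := by
    refine tendsto_finset_sum _ fun i _ => ?_
    have he := gramSchmidtNormed_continuousAt_s3 v hv x₀ hli i
    have hinner : ContinuousAt (fun x => innerSL ℝ (gramSchmidtNormed ℝ (v x) i)) x₀ :=
      (innerSL ℝ).continuous.continuousAt.comp he
    have h2 : ContinuousAt (fun p : (H →L[ℝ] ℝ) × H =>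
        ContinuousLinearMap.smulRightL ℝ H H p.1 p.2)
        (innerSL ℝ (gramSchmidtNormed ℝ (v x₀) i), gramSchmidtNormed ℝ (v x₀) i) :=
      ((ContinuousLinearMap.smulRightL ℝ H H).continuous₂).continuousAt
    exact ContinuousAt.comp₂ h2 hinner he
  exact hcont.congr heq.symm
end
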